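/- The conic A y² + 2B y + C + D z² = 0 in the (z,y)-plane coincides with the curve k²(y − l)² − k z² = ε (for some k ≠ 0, l ∈ ℝ, ε = ±1 fixed) for some choice of k, l if and only if [A : B : C : D] lies on the quadric AC − B² + εD² = 0 in ℝℙ³ with D ≠ 0 and appropriate sign conditions; in particular, writing the conic from (k,l) as A = k², B = −k²l, C = k²l² − ε, D = −k, one always has AC − B² + εD² = 0. -/

import Mathlib

/-- the conic `A y² + 2B y + C + D z² = 0` coincides with a curve
`k²(y - l)² - k z² = ε` exactly for homogeneous coordinates `[A : B : C : D]` on the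
quadric `AC - B² + εD² = 0` with `D ≠ 0` (and the appropriate sign/nondegeneracy
condition `A ≠ 0`); in particular, the coordinates `A = k²`, `B = -k²l`,
`C = k²l² - ε`, `D = -k` obtained from `(k, l)` always satisfy `AC - B² + εD² = 0`. -/
theorem statement11 (ε : ℝ) (hε : ε = 1 ∨ ε = -1) :
    (∀ k l : ℝ, k ≠ 0 →
      (k ^ 2 * (k ^ 2 * l ^ 2 - ε) - (-(k ^ 2) * l) ^ 2 + ε * (-k) ^ 2 = 0 ∧
       ∀ z y : ℝ,
         (k ^ 2 * y ^ 2 + 2 * (-(k ^ 2) * l) * y + (k ^ 2 * l ^ 2 - ε) + (-k) * z ^ 2 = 0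
           ↔ k ^ 2 * (y - l) ^ 2 - k * z ^ 2 = ε))) ∧
    (∀ A B C D : ℝ, A * C - B ^ 2 + ε * D ^ 2 = 0 → D ≠ 0 → A ≠ 0 →
      ∃ t k l : ℝ, t ≠ 0 ∧ k ≠ 0 ∧
        t * A = k ^ 2 ∧ t * B = -(k ^ 2) * l ∧ t * C = k ^ 2 * l ^ 2 - ε ∧ t * D = -k) := by
  constructor
  · intro k l hk
    refine ⟨by ring, fun z y => ?_⟩
    constructor <;> intro h <;> nlinarith [h]
  · intro A B C D hq hD hA
    refine ⟨A / D ^ 2, -A / D, -B / A, ?_, ?_, ?_, ?_, ?_, ?_⟩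
    · exact div_ne_zero hA (pow_ne_zero 2 hD)
    · exact div_ne_zero (neg_ne_zero.mpr hA) hD
    · field_simp
    · field_simp
    · have hD2 : D ^ 2 ≠ 0 := pow_ne_zero 2 hD
      field_simp
      linear_combination hq
    · field_simp
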